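/- Let A ∈ ℝ^{m×n}, C ∈ ℝ^{p×n} satisfy rank(C) = p and rank([A; C]) = n, and let b ∈ ℝ^m, d ∈ ℝ^p. Then the constrained least squares problem min_{x∈ℝⁿ, Cx=d} ‖Ax−b‖₂ has a unique solution, given by x = K b + C_A† d, where P = I_n − C†C, K = (AP)†, and C_A† = (I_n − KA)C†. -/
import Mathlib


open Matrix

/-- `Bd` is the Moore–Penrose pseudoinverse of `B`. -/
def IsMoorePenrose {a b : Type*} [Fintype a] [Fintype b]
    (B : Matrix a b ℝ) (Bd : Matrix b a ℝ) : Prop :=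
  B * Bd * B = B ∧ Bd * B * Bd = Bd ∧ (B * Bd)ᵀ = B * Bd ∧ (Bd * B)ᵀ = Bd * B


/-- full column rank implies trivial kernel for `mulVec`. -/
lemma aux_inj {q : Type*} [Fintype q] {n : ℕ} (M : Matrix q (Fin n) ℝ) (h : M.rank = n) :
    ∀ v : Fin n → ℝ, M.mulVec v = 0 → v = 0 := by
  intro v hv
  have h1 := M.mulVecLin.finrank_range_add_finrank_ker
  have h2 : Module.finrank ℝ (Fin n → ℝ) = n := by simp
  rw [h2] at h1
  have h3 : Module.finrank ℝ (LinearMap.ker M.mulVecLin) = 0 := by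
    have : M.rank = Module.finrank ℝ (LinearMap.range M.mulVecLin) := rfl
    omega
  have h4 : LinearMap.ker M.mulVecLin = ⊥ := Submodule.finrank_eq_zero.1 h3
  have hv' : v ∈ LinearMap.ker M.mulVecLin := by
    simpa [LinearMap.mem_ker, Matrix.mulVecLin_apply] using hv
  rw [h4] at hv'
  simpa using hv'

/-- full row rank implies surjectivity for `mulVec`. -/
lemma aux_surj {q n : ℕ} (M : Matrix (Fin q) (Fin n) ℝ) (h : M.rank = q) :
    ∀ d : Fin q → ℝ, ∃ u, M.mulVec u = d := by
  intro d
  have h2 : Module.finrank ℝ (Fin q → ℝ) = q := by simp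
  have h4 : LinearMap.range M.mulVecLin = ⊤ :=
    Submodule.eq_top_of_finrank_eq (by rw [h2]; exact h)
  have : d ∈ LinearMap.range M.mulVecLin := h4 ▸ Submodule.mem_top
  obtain ⟨u, hu⟩ := this
  exact ⟨u, hu⟩

lemma aux_dot {a b : Type*} [Fintype a] [Fintype b] (M : Matrix a b ℝ) (u : b → ℝ)
    (r : a → ℝ) : (M *ᵥ u) ⬝ᵥ r = u ⬝ᵥ (Mᵀ *ᵥ r) := by
  rw [dotProduct_comm, dotProduct_mulVec, ← vecMul_transpose, dotProduct_comm,
    transpose_transpose]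


lemma aux_dot_self_nonneg {a : Type*} [Fintype a] (v : a → ℝ) : 0 ≤ v ⬝ᵥ v :=
  Finset.sum_nonneg fun i _ => mul_self_nonneg (v i)

set_option maxHeartbeats 1000000 in
/-- Under the rank conditions `rank C = p` and `rank [A; C] = n`, the equality
constrained least squares problem `min_{Cx=d} ‖Ax − b‖₂` has the unique solution
`x = K b + C_A† d`, where `P = I − C†C`, `K = (AP)†`, `C_A† = (I − KA)C†`. -/
theorem stmt10 (m n p : ℕ) (A : Matrix (Fin m) (Fin n) ℝ) (C : Matrix (Fin p) (Fin n) ℝ)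
    (b : Fin m → ℝ) (d : Fin p → ℝ)
    (hC : C.rank = p) (hAC : (Matrix.fromRows A C).rank = n)
    (Cdag : Matrix (Fin n) (Fin p) ℝ) (hCdag : IsMoorePenrose C Cdag)
    (P : Matrix (Fin n) (Fin n) ℝ) (hP : P = 1 - Cdag * C)
    (K : Matrix (Fin n) (Fin m) ℝ) (hK : IsMoorePenrose (A * P) K)
    (CAdag : Matrix (Fin n) (Fin p) ℝ) (hCAdag : CAdag = (1 - K * A) * Cdag) :
    ∀ x : Fin n → ℝ,
      (C.mulVec x = d ∧
        ∀ y : Fin n → ℝ, C.mulVec y = d →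
          (∑ i, (A.mulVec x i - b i) ^ 2) ≤ ∑ i, (A.mulVec y i - b i) ^ 2) ↔
      x = K.mulVec b + CAdag.mulVec d := by
  obtain ⟨hC1, hC2, hC3, hC4⟩ := hCdag
  obtain ⟨hK1, hK2, hK3, hK4⟩ := hK
  -- kernel injectivity from rank [A; C] = n
  have hker : ∀ v : Fin n → ℝ, A.mulVec v = 0 → C.mulVec v = 0 → v = 0 := by
    intro v hA hCv
    refine aux_inj _ hAC v ?_
    rw [Matrix.fromRows_mulVec, hA, hCv]
    ext (i | j) <;> rfl
  -- matrix algebra facts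
  have hPsym : Pᵀ = P := by rw [hP]; simp [transpose_sub, hC4]
  have hQQ : (Cdag * C) * (Cdag * C) = Cdag * C := by
    rw [show (Cdag * C) * (Cdag * C) = (Cdag * C * Cdag) * C by rw [Matrix.mul_assoc, Matrix.mul_assoc, Matrix.mul_assoc], hC2]
  have hPP : P * P = P := by
    rw [hP]; simp only [sub_mul, mul_sub, one_mul, mul_one, hQQ]; abel
  have hCP : C * P = 0 := by
    rw [hP, Matrix.mul_sub, Matrix.mul_one, ← Matrix.mul_assoc, hC1, sub_self]
  have hKform : K = P * (Aᵀ * Kᵀ * K) := by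
    calc K = K * (A * P) * K := hK2.symm
    _ = (K * (A * P))ᵀ * K := by rw [hK4]
    _ = P * (Aᵀ * Kᵀ * K) := by
        simp only [transpose_mul, transpose_transpose, hPsym, Matrix.mul_assoc]
  have hPK : P * K = K := by
    conv_lhs => rw [hKform, ← Matrix.mul_assoc, hPP]
    exact hKform.symm
  have hCK : C * K = 0 := by
    rw [← hPK, ← Matrix.mul_assoc, hCP, Matrix.zero_mul]
  have hAK : A * K = (A * P) * K := by conv_lhs => rw [← hPK, ← Matrix.mul_assoc]
  have hNorm : (A * P)ᵀ * (1 - A * K) = 0 := by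
    have h5 : (A * P)ᵀ * ((A * P) * K) = (A * P)ᵀ := by
      calc (A * P)ᵀ * ((A * P) * K) = (A * P)ᵀ * ((A * P) * K)ᵀ := by rw [hK3]
      _ = ((A * P) * K * (A * P))ᵀ := by rw [← transpose_mul]
      _ = (A * P)ᵀ := by rw [hK1]
    rw [hAK, Matrix.mul_sub, Matrix.mul_one, h5, sub_self]
  -- the candidate solution
  set x₀ : Fin n → ℝ := K.mulVec b + CAdag.mulVec d with hx₀
  -- feasibility of x₀
  have hCCA : C * CAdag = C * Cdag := by
    rw [hCAdag, ← Matrix.mul_assoc, Matrix.mul_sub, Matrix.mul_one, ← Matrix.mul_assoc,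
      hCK, Matrix.zero_mul, sub_zero]
  have hfeas₀ : C.mulVec x₀ = d := by
    obtain ⟨u, hu⟩ := aux_surj C hC d
    rw [hx₀, Matrix.mulVec_add, Matrix.mulVec_mulVec, Matrix.mulVec_mulVec, hCK,
      Matrix.zero_mulVec, zero_add, hCCA, ← hu, Matrix.mulVec_mulVec, hC1]
  -- normal equation of x₀
  have hnorm₀ : (A * P)ᵀ.mulVec (A.mulVec x₀ - b) = 0 := by
    have hres : A.mulVec x₀ - b
        = (1 - A * K).mulVec (A.mulVec (Cdag.mulVec d) - b) := by
      rw [hx₀, hCAdag]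
      simp only [Matrix.mulVec_add, Matrix.mulVec_mulVec, Matrix.mulVec_sub,
        Matrix.sub_mul, Matrix.mul_sub, Matrix.one_mul, Matrix.mul_one,
        Matrix.sub_mulVec, Matrix.one_mulVec, Matrix.mul_assoc]
      ext i
      simp only [Matrix.mulVec_mulVec, Matrix.mul_assoc, Pi.add_apply, Pi.sub_apply]
      ring
    rw [hres, Matrix.mulVec_mulVec, hNorm, Matrix.zero_mulVec]
  -- P fixes vectors in ker C
  have hPfix : ∀ v : Fin n → ℝ, C.mulVec v = 0 → P.mulVec v = v := by
    intro v hv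
    rw [hP, Matrix.sub_mulVec, Matrix.one_mulVec, ← Matrix.mulVec_mulVec, hv,
      Matrix.mulVec_zero, sub_zero]
  -- normal equation implies minimality
  have hmin_of_norm : ∀ x : Fin n → ℝ, C.mulVec x = d →
      (A * P)ᵀ.mulVec (A.mulVec x - b) = 0 →
      ∀ y : Fin n → ℝ, C.mulVec y = d →
        (∑ i, (A.mulVec x i - b i) ^ 2) ≤ ∑ i, (A.mulVec y i - b i) ^ 2 := by
    intro x hfx hnx y hfy
    set r : Fin m → ℝ := A.mulVec x - b with hr
    set u : Fin n → ℝ := y - x with hu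
    have hCu : C.mulVec u = 0 := by rw [hu, Matrix.mulVec_sub, hfy, hfx, sub_self]
    have hPu : P.mulVec u = u := hPfix u hCu
    have hcross : (A.mulVec u) ⬝ᵥ r = 0 := by
      calc (A.mulVec u) ⬝ᵥ r = (A.mulVec (P.mulVec u)) ⬝ᵥ r := by rw [hPu]
      _ = ((A * P).mulVec u) ⬝ᵥ r := by rw [Matrix.mulVec_mulVec]
      _ = u ⬝ᵥ ((A * P)ᵀ.mulVec r) := aux_dot _ _ _
      _ = 0 := by rw [hnx]; simp
    have hy : A.mulVec y - b = A.mulVec u + r := by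
      rw [hu, hr, Matrix.mulVec_sub]; abel
    have e1 : ∀ z : Fin m → ℝ, (∑ i, (z i) ^ 2) = z ⬝ᵥ z := by
      intro z; simp [dotProduct, sq]
    have e2 : (∑ i, (A.mulVec y i - b i) ^ 2) = (A.mulVec y - b) ⬝ᵥ (A.mulVec y - b) := by
      rw [← e1]; rfl
    have e3 : (∑ i, (A.mulVec x i - b i) ^ 2) = r ⬝ᵥ r := by rw [← e1]; rfl
    rw [e2, e3, hy]
    have hAu := aux_dot_self_nonneg (A.mulVec u)
    have expand : (A.mulVec u + r) ⬝ᵥ (A.mulVec u + r)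
        = (A.mulVec u) ⬝ᵥ (A.mulVec u) + 2 * ((A.mulVec u) ⬝ᵥ r) + r ⬝ᵥ r := by
      simp [add_dotProduct, dotProduct_add, dotProduct_comm r (A.mulVec u)]; ring
    linarith [expand, hcross, hAu]
  -- minimality implies normal equation
  have hnorm_of_min : ∀ x : Fin n → ℝ, C.mulVec x = d →
      (∀ y : Fin n → ℝ, C.mulVec y = d →
        (∑ i, (A.mulVec x i - b i) ^ 2) ≤ ∑ i, (A.mulVec y i - b i) ^ 2) →
      (A * P)ᵀ.mulVec (A.mulVec x - b) = 0 := by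
    intro x hfx hmin
    set r : Fin m → ℝ := A.mulVec x - b with hr
    set w : Fin n → ℝ := (A * P)ᵀ.mulVec r with hw
    have hCAPt : C * (A * P)ᵀ = 0 := by
      rw [transpose_mul, hPsym, ← Matrix.mul_assoc, hCP, Matrix.zero_mul]
    have hCw : C.mulVec w = 0 := by
      rw [hw, Matrix.mulVec_mulVec, hCAPt, Matrix.zero_mulVec]
    have hPw : P.mulVec w = w := hPfix w hCw
    have hwz : w = P.mulVec (Aᵀ.mulVec r) := by
      rw [hw, transpose_mul, hPsym, ← Matrix.mulVec_mulVec]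
    have hAwr : (A.mulVec w) ⬝ᵥ r = w ⬝ᵥ w := by
      calc (A.mulVec w) ⬝ᵥ r = w ⬝ᵥ (Aᵀ.mulVec r) := aux_dot _ _ _
      _ = (P.mulVec w) ⬝ᵥ (Aᵀ.mulVec r) := by rw [hPw]
      _ = w ⬝ᵥ (Pᵀ.mulVec (Aᵀ.mulVec r)) := aux_dot _ _ _
      _ = w ⬝ᵥ w := by rw [hPsym, ← hwz]
    have e1 : ∀ z : Fin m → ℝ, (∑ i, (z i) ^ 2) = z ⬝ᵥ z := by
      intro z; simp [dotProduct, sq]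
    have key : ∀ c : ℝ, 0 ≤ 2 * c * (w ⬝ᵥ w) + c ^ 2 * ((A.mulVec w) ⬝ᵥ (A.mulVec w)) := by
      intro c
      have hyfeas : C.mulVec (x + c • w) = d := by
        rw [Matrix.mulVec_add, Matrix.mulVec_smul, hCw, smul_zero, add_zero, hfx]
      have hle := hmin (x + c • w) hyfeas
      have hres : A.mulVec (x + c • w) - b = c • (A.mulVec w) + r := by
        rw [Matrix.mulVec_add, Matrix.mulVec_smul, hr]; abel
      have e2 : (∑ i, (A.mulVec (x + c • w) i - b i) ^ 2)
          = (A.mulVec (x + c • w) - b) ⬝ᵥ (A.mulVec (x + c • w) - b) := by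
        rw [← e1]; rfl
      have e3 : (∑ i, (A.mulVec x i - b i) ^ 2) = r ⬝ᵥ r := by rw [← e1]; rfl
      rw [e2, e3, hres] at hle
      have expand : (c • (A.mulVec w) + r) ⬝ᵥ (c • (A.mulVec w) + r)
          = c ^ 2 * ((A.mulVec w) ⬝ᵥ (A.mulVec w)) + 2 * c * ((A.mulVec w) ⬝ᵥ r)
            + r ⬝ᵥ r := by
        simp only [add_dotProduct, dotProduct_add, smul_dotProduct, dotProduct_smul,
          dotProduct_comm r (A.mulVec w), smul_eq_mul]
        ring
      rw [expand, hAwr] at hle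
      linarith
    have hzero : w ⬝ᵥ w = 0 := by
      by_contra hne
      have hs : 0 < w ⬝ᵥ w := lt_of_le_of_ne (aux_dot_self_nonneg w) (Ne.symm hne)
      have ht : 0 ≤ (A.mulVec w) ⬝ᵥ (A.mulVec w) := aux_dot_self_nonneg _
      set s : ℝ := w ⬝ᵥ w
      set t : ℝ := (A.mulVec w) ⬝ᵥ (A.mulVec w)
      have hkey := key (-s / (t + 1))
      have ht1 : (0:ℝ) < t + 1 := by linarith
      have hineq : (0:ℝ) ≤ (2 * (-s / (t + 1)) * s + (-s / (t + 1)) ^ 2 * t) * (t + 1) ^ 2 :=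
        mul_nonneg hkey (by positivity)
      have heq : (2 * (-s / (t + 1)) * s + (-s / (t + 1)) ^ 2 * t) * (t + 1) ^ 2
          = -(s ^ 2 * (t + 2)) := by
        field_simp
        ring
      rw [heq] at hineq
      nlinarith [mul_pos hs hs]
    have hw0 : w = 0 := dotProduct_self_eq_zero.1 hzero
    exact hw0
  -- uniqueness
  have huniq : ∀ x x' : Fin n → ℝ, C.mulVec x = d → C.mulVec x' = d →
      (A * P)ᵀ.mulVec (A.mulVec x - b) = 0 → (A * P)ᵀ.mulVec (A.mulVec x' - b) = 0 →
      x = x' := by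
    intro x x' hfx hfx' hnx hnx'
    set v : Fin n → ℝ := x - x' with hv
    have hCv : C.mulVec v = 0 := by rw [hv, Matrix.mulVec_sub, hfx, hfx', sub_self]
    have hPv : P.mulVec v = v := hPfix v hCv
    have hAv : A.mulVec v = (A.mulVec x - b) - (A.mulVec x' - b) := by
      rw [hv, Matrix.mulVec_sub]; abel
    have hAv0 : (A * P)ᵀ.mulVec (A.mulVec v) = 0 := by
      rw [hAv, Matrix.mulVec_sub, hnx, hnx', sub_self]
    have hdot : (A.mulVec v) ⬝ᵥ (A.mulVec v) = 0 := by
      calc (A.mulVec v) ⬝ᵥ (A.mulVec v)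
          = (A.mulVec (P.mulVec v)) ⬝ᵥ (A.mulVec v) := by rw [hPv]
      _ = ((A * P).mulVec v) ⬝ᵥ (A.mulVec v) := by rw [Matrix.mulVec_mulVec]
      _ = v ⬝ᵥ ((A * P)ᵀ.mulVec (A.mulVec v)) := aux_dot _ _ _
      _ = 0 := by rw [hAv0]; simp
    have hA0 : A.mulVec v = 0 := dotProduct_self_eq_zero.1 hdot
    have hv0 : v = 0 := hker v hA0 hCv
    have : x - x' = 0 := by rw [← hv]; exact hv0
    exact sub_eq_zero.1 this
  -- conclusion
  intro x
  constructor
  · rintro ⟨hfx, hmin⟩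
    exact huniq x x₀ hfx hfeas₀ (hnorm_of_min x hfx hmin) hnorm₀
  · rintro rfl
    exact ⟨hfeas₀, hmin_of_norm x₀ hfeas₀ hnorm₀⟩
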